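/- Let Σ be a finite subset of ωK_n. There exists an automorphism f of ωK_n with all orbits infinite having Σ as a set of orbit representatives if and only if |Σ| is a multiple of n, say |Σ| = rn, and there exists a partition {P_1, …, P_r} of ℤ into infinite sets such that Σ meets the components indexed by each P_i in exactly n vertices in total, i.e. Σ_{j ∈ P_i} |L_j ∩ Σ| = n for all i. -/

import Mathlib

/-- ωK_n: the disjoint union of countably many copies of the complete graph K_n, with
connected components L_j = {j} × (Fin n) indexed by j ∈ ℤ. -/
def omegaKn (n : ℕ) : SimpleGraph (ℤ × Fin n) :=
  SimpleGraph.fromRel (fun u v => u.1 = v.1)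


lemma semiconj_zpow {α β : Type*} (e : Equiv.Perm α) (b : Equiv.Perm β) (φ : α → β)
    (h : ∀ x, φ (e x) = b (φ x)) : ∀ (k : ℤ) (x : α), φ ((e ^ k) x) = (b ^ k) (φ x) := by
  have hinv : ∀ x, φ (e⁻¹ x) = b⁻¹ (φ x) := by
    intro x
    have := h (e⁻¹ x)
    rw [show e (e⁻¹ x) = x from e.apply_symm_apply x] at this
    rw [this]; simp
  intro k
  induction k using Int.induction_on with
  | zero => simp
  | succ m ih =>
      intro x
      have h1 : (e ^ ((m : ℤ) + 1)) x = (e ^ (m : ℤ)) (e x) := by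
        rw [zpow_add_one]; simp [Equiv.Perm.mul_apply]
      have h2 : (b ^ ((m : ℤ) + 1)) (φ x) = (b ^ (m : ℤ)) (b (φ x)) := by
        rw [zpow_add_one]; simp [Equiv.Perm.mul_apply]
      rw [h1, h2, ih (e x), h]
  | pred m ih =>
      intro x
      have h1 : (e ^ (-(m : ℤ) - 1)) x = (e ^ (-(m : ℤ))) (e⁻¹ x) := by
        rw [zpow_sub_one]; simp [Equiv.Perm.mul_apply]
      have h2 : (b ^ (-(m : ℤ) - 1)) (φ x) = (b ^ (-(m : ℤ))) (b⁻¹ (φ x)) := by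
        rw [zpow_sub_one]; simp [Equiv.Perm.mul_apply]
      rw [h1, h2, ih (e⁻¹ x), hinv]

lemma sc_range {α : Type*} (e : Equiv.Perm α) (x : α) :
    {w | Equiv.Perm.SameCycle e x w} = Set.range (fun k : ℤ => (e ^ k) x) := by
  ext w
  exact ⟨fun ⟨k, hk⟩ => ⟨k, hk⟩, fun ⟨k, hk⟩ => ⟨k, hk⟩⟩

lemma fixpt_zpow {α : Type*} (e : Equiv.Perm α) (x : α) (h : e x = x) :
    ∀ k : ℤ, (e ^ k) x = x := by
  have := semiconj_zpow e e id (fun y => rfl)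
  intro k
  induction k using Int.induction_on with
  | zero => simp
  | succ m ih => rw [zpow_add_one]; simp only [Equiv.Perm.mul_apply, h]; exact ih
  | pred m ih =>
      rw [zpow_sub_one]; simp only [Equiv.Perm.mul_apply]
      have h2 : e⁻¹ x = x := by conv_lhs => rw [← h]; rw [show e⁻¹ (e x) = x from e.symm_apply_apply x]
      rw [h2]; exact ih

lemma stab_triv_of_infinite {α : Type*} (e : Equiv.Perm α) (x : α)
    (h : {w | Equiv.Perm.SameCycle e x w}.Infinite) : ∀ k : ℤ, (e ^ k) x = x → k = 0 := by
  intro k hk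
  by_contra hk0
  apply h
  set d : ℕ := k.natAbs with hd
  have hd0 : 0 < d := Int.natAbs_pos.mpr hk0
  have hdk : (e ^ (d : ℤ)) x = x := by
    rcases Int.natAbs_eq k with h1 | h1
    · rw [← h1]; exact hk
    · have : (d : ℤ) = -k := by omega
      rw [this]
      apply (e ^ k).injective
      rw [hk, ← Equiv.Perm.mul_apply, ← zpow_add]
      simp
  have hsub : {w | Equiv.Perm.SameCycle e x w} ⊆ Set.range (fun t : Fin d => (e ^ (t : ℤ)) x) := by
    rintro w ⟨m, rfl⟩
    have hmod : 0 ≤ m % (d : ℤ) ∧ m % (d : ℤ) < d := by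
      constructor
      · exact Int.emod_nonneg m (by exact_mod_cast hd0.ne')
      · exact Int.emod_lt_of_pos m (by exact_mod_cast hd0)
    refine ⟨⟨(m % (d : ℤ)).toNat, by omega⟩, ?_⟩
    have hmeq : m = m % (d : ℤ) + (d : ℤ) * (m / d) := by
      have := Int.mul_ediv_add_emod m (d : ℤ); omega
    simp only
    have hcast : ((⟨(m % (d : ℤ)).toNat, by omega⟩ : Fin d) : ℤ) = m % (d : ℤ) := by
      simp; omega
    rw [hcast]
    conv_rhs => rw [hmeq]
    rw [zpow_add, Equiv.Perm.mul_apply, zpow_mul]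
    congr 1
    exact (fixpt_zpow (e ^ (d : ℤ)) x hdk (m / d)).symm
  exact (Set.finite_range _).subset hsub

lemma perm_extend {n : ℕ} (j : ℤ) (f : Fin n → ℤ × Fin n) (hf : Function.Injective f) :
    ∃ π : Equiv.Perm (Fin n), ∀ a, (f a).1 = j → π a = (f a).2 := by
  classical
  let p : Fin n → Prop := fun a => (f a).1 = j
  let q : Fin n → Prop := fun b => ∃ a, (f a).1 = j ∧ (f a).2 = b
  have hbij : Function.Bijective
      (fun a : {a // p a} => (⟨(f a.1).2, a.1, a.2, rfl⟩ : {b // q b})) := by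
    constructor
    · rintro ⟨a, ha⟩ ⟨a', ha'⟩ h
      simp only [Subtype.mk.injEq] at h
      have : f a = f a' := Prod.ext (ha.trans ha'.symm) h
      exact Subtype.ext (hf this)
    · rintro ⟨b, a, h1, h2⟩
      exact ⟨⟨a, h1⟩, Subtype.ext h2⟩
  let e : {a // p a} ≃ {b // q b} := Equiv.ofBijective _ hbij
  refine ⟨e.extendSubtype, fun a ha => ?_⟩
  rw [Equiv.extendSubtype_apply_of_mem e a ha]
  rfl

lemma omegaKn_adj {n : ℕ} (x y : ℤ × Fin n) :
    (omegaKn n).Adj x y ↔ x ≠ y ∧ x.1 = y.1 := by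
  simp [omegaKn, SimpleGraph.fromRel_adj, eq_comm (a := x.1)]

lemma iso_fst {n : ℕ} (g : omegaKn n ≃g omegaKn n) (x y : ℤ × Fin n)
    (h : x.1 = y.1) : (g.toEquiv x).1 = (g.toEquiv y).1 := by
  by_cases hxy : x = y
  · rw [hxy]
  · have hadj : (omegaKn n).Adj x y := (omegaKn_adj x y).2 ⟨hxy, h⟩
    have := g.map_adj_iff.2 hadj
    exact ((omegaKn_adj _ _).1 this).2

section
variable {n : ℕ} (hn : 0 < n) (g : omegaKn n ≃g omegaKn n)

lemma iso_fst_symm (x y : ℤ × Fin n) (h : x.1 = y.1) :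
    (g.toEquiv.symm x).1 = (g.toEquiv.symm y).1 :=
  iso_fst g.symm x y h

/-- the induced permutation on the index set ℤ -/
noncomputable def barG : Equiv.Perm ℤ where
  toFun j := (g.toEquiv (j, ⟨0, hn⟩)).1
  invFun j := (g.toEquiv.symm (j, ⟨0, hn⟩)).1
  left_inv j := by
    have h1 : (g.toEquiv.symm ((g.toEquiv (j, ⟨0, hn⟩)).1, ⟨0, hn⟩)).1
        = (g.toEquiv.symm (g.toEquiv (j, ⟨0, hn⟩))).1 :=
      iso_fst_symm g _ _ rfl
    rw [Equiv.symm_apply_apply] at h1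
    exact h1
  right_inv j := by
    have h1 : (g.toEquiv ((g.toEquiv.symm (j, ⟨0, hn⟩)).1, ⟨0, hn⟩)).1
        = (g.toEquiv (g.toEquiv.symm (j, ⟨0, hn⟩))).1 :=
      iso_fst g _ _ rfl
    rw [Equiv.apply_symm_apply] at h1
    exact h1

lemma barG_fst (x : ℤ × Fin n) : (g.toEquiv x).1 = barG hn g x.1 :=
  iso_fst g x (x.1, ⟨0, hn⟩) rfl

lemma barG_zpow (k : ℤ) (x : ℤ × Fin n) :
    ((g.toEquiv ^ k) x).1 = ((barG hn g) ^ k) x.1 :=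
  semiconj_zpow g.toEquiv (barG hn g) Prod.fst (fun x => barG_fst hn g x) k x

lemma barG_stab (hinf : ∀ v, {w | Equiv.Perm.SameCycle g.toEquiv v w}.Infinite)
    (j : ℤ) (k : ℤ) (hk : ((barG hn g) ^ k) j = j) : k = 0 := by
  set e := g.toEquiv with he
  have hup : ∀ a : Fin n, ∃ b : Fin n, (e ^ k) (j, a) = (j, b) := by
    intro a
    refine ⟨((e ^ k) (j, a)).2, ?_⟩
    have h1 : ((e ^ k) (j, a)).1 = j := by
      rw [barG_zpow hn g k (j, a)]; exact hk
    exact Prod.ext h1 rfl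
  choose pf hpf using hup
  have pinj : Function.Injective pf := by
    intro a a' h
    have : (e ^ k) (j, a) = (e ^ k) (j, a') := by rw [hpf, hpf, h]
    have := (e ^ k).injective this
    exact (Prod.ext_iff.1 this).2
  have pbij : Function.Bijective pf := Finite.injective_iff_bijective.1 pinj
  set pp : Equiv.Perm (Fin n) := Equiv.ofBijective pf pbij with hpp
  have hppa : ∀ a, pp a = pf a := fun a => rfl
  set m := orderOf pp with hm
  have hm0 : 0 < m := orderOf_pos pp
  have hiter : ∀ (t : ℕ) (a : Fin n), ((e ^ k) ^ t) (j, a) = (j, (pp ^ t) a) := by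
    intro t
    induction t with
    | zero => intro a; simp
    | succ t ih =>
        intro a
        rw [pow_succ, pow_succ, Equiv.Perm.mul_apply, Equiv.Perm.mul_apply, hpf, ← hppa, ih]
  have hfix : (e ^ (k * (m : ℤ))) (j, ⟨0, hn⟩) = (j, ⟨0, hn⟩) := by
    rw [zpow_mul, zpow_natCast, hiter m, pow_orderOf_eq_one]
    simp
  have := stab_triv_of_infinite e (j, ⟨0, hn⟩) (hinf (j, ⟨0, hn⟩)) (k * m) hfix
  have : k = 0 ∨ (m : ℤ) = 0 := mul_eq_zero.1 this
  omega

lemma barG_orbit_infinite (hinf : ∀ v, {w | Equiv.Perm.SameCycle g.toEquiv v w}.Infinite)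
    (j : ℤ) : {w | (barG hn g).SameCycle j w}.Infinite := by
  rw [sc_range]
  apply Set.infinite_range_of_injective
  intro k l h
  simp only at h
  have h2 : ((barG hn g) ^ (k - l)) (((barG hn g) ^ l) j) = ((barG hn g) ^ l) j := by
    rw [← Equiv.Perm.mul_apply, ← zpow_add, sub_add_cancel, h]
  have := barG_stab hn g hinf _ _ h2
  omega

lemma count_lemma (S : Finset (ℤ × Fin n))
    (hinf : ∀ v, {w | Equiv.Perm.SameCycle g.toEquiv v w}.Infinite)
    (htr : ∀ x, ∃! σ, σ ∈ S ∧ Equiv.Perm.SameCycle g.toEquiv σ x) (j₀ : ℤ) :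
    ((S : Set (ℤ × Fin n)) ∩ {x | (barG hn g).SameCycle j₀ x.1}).ncard = n := by
  set e := g.toEquiv with he
  set b := barG hn g with hb
  have hproj : ∀ x y : ℤ × Fin n, Equiv.Perm.SameCycle e x y → b.SameCycle x.1 y.1 := by
    rintro x y ⟨k, hk⟩
    exact ⟨k, by rw [← barG_zpow hn g k x, hk]⟩
  choose μ hμ huniq using htr
  have hμS : ∀ x, μ x ∈ S := fun x => (hμ x).1
  have hμsc : ∀ x, Equiv.Perm.SameCycle e (μ x) x := fun x => (hμ x).2
  set T := (S : Set (ℤ × Fin n)) ∩ {x | b.SameCycle j₀ x.1} with hT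
  have hbij : Set.BijOn (fun a : Fin n => μ (j₀, a)) Set.univ T := by
    refine ⟨?_, ?_, ?_⟩
    · intro a _
      refine ⟨hμS _, ?_⟩
      have := hproj _ _ (hμsc (j₀, a))
      exact this.symm
    · intro a _ a' _ h
      have h' : μ (j₀, a) = μ (j₀, a') := h
      have hsc : Equiv.Perm.SameCycle e (j₀, a) ((j₀, a') : ℤ × Fin n) :=
        (hμsc (j₀, a)).symm.trans (h' ▸ hμsc (j₀, a'))
      obtain ⟨k, hk⟩ := hsc
      have hj : (b ^ k) j₀ = j₀ := by
        have := congrArg Prod.fst hk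
        rw [barG_zpow hn g k (j₀, a)] at this
        exact this
      have hk0 : k = 0 := barG_stab hn g hinf j₀ k hj
      rw [hk0] at hk
      simp at hk
      exact hk
    · rintro σ ⟨hσS, hσsc⟩
      obtain ⟨k, hk⟩ := (Equiv.Perm.SameCycle.symm hσsc)
      have hx : (e ^ k) σ = (j₀, ((e ^ k) σ).2) := by
        refine Prod.ext ?_ rfl
        rw [barG_zpow hn g k σ]
        exact hk
      have hsc2 : Equiv.Perm.SameCycle e σ ((j₀, ((e ^ k) σ).2) : ℤ × Fin n) := ⟨k, hx⟩
      have := huniq (j₀, ((e ^ k) σ).2) σ ⟨hσS, hsc2⟩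
      exact ⟨((e ^ k) σ).2, Set.mem_univ _, this.symm⟩
  have hcard : Nat.card T = n := by
    have eqv : Fin n ≃ T := (Equiv.Set.univ (Fin n)).symm.trans (hbij.equiv _)
    rw [← Nat.card_congr eqv, Nat.card_eq_fintype_card, Fintype.card_fin]
  rw [← Nat.card_coe_set_eq]
  exact hcard

lemma sc_orbit_eq (b : Equiv.Perm ℤ) (j j' : ℤ) (h : b.SameCycle j j') :
    {w | b.SameCycle j w} = {w | b.SameCycle j' w} := by
  ext w
  exact ⟨fun h' => h.symm.trans h', fun h' => h.trans h'⟩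

include hn in
lemma forward_dir (S : Finset (ℤ × Fin n))
    (hinf : ∀ v, {w | Equiv.Perm.SameCycle g.toEquiv v w}.Infinite)
    (htr : ∀ x, ∃! σ, σ ∈ S ∧ Equiv.Perm.SameCycle g.toEquiv σ x) :
    ∃ r : ℕ, S.card = r * n ∧
      ∃ P : Fin r → Set ℤ,
        (∀ i, (P i).Infinite) ∧
        (Pairwise fun i j => Disjoint (P i) (P j)) ∧
        (⋃ i, P i) = Set.univ ∧
        ∀ i, ((↑S : Set (ℤ × Fin n)) ∩ {x | x.1 ∈ P i}).ncard = n := by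
  classical
  set b := barG hn g with hb
  set F : Finset (Set ℤ) := S.image (fun σ => {w | b.SameCycle σ.1 w}) with hF
  refine ⟨F.card, ?_, fun i => ((F.equivFin.symm i : {x // x ∈ F}) : Set ℤ), ?_, ?_, ?_, ?_⟩
  · -- cardinality
    have h1 : S.card = ∑ t ∈ F, (S.filter (fun σ => {w | b.SameCycle σ.1 w} = t)).card :=
      Finset.card_eq_sum_card_image _ S
    have h2 : ∀ t ∈ F, (S.filter (fun σ => {w | b.SameCycle σ.1 w} = t)).card = n := by
      intro t ht
      obtain ⟨σ₀, hσ₀S, hσ₀⟩ := Finset.mem_image.1 ht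
      have hset : ((S.filter (fun σ => {w | b.SameCycle σ.1 w} = t)) : Set (ℤ × Fin n))
          = (S : Set (ℤ × Fin n)) ∩ {x | b.SameCycle σ₀.1 x.1} := by
        ext x
        simp only [Finset.coe_filter, Set.mem_setOf_eq, Set.mem_inter_iff, Finset.mem_coe]
        constructor
        · rintro ⟨hxS, hxt⟩
          refine ⟨hxS, ?_⟩
          have : x.1 ∈ {w | b.SameCycle x.1 w} := Equiv.Perm.SameCycle.refl b x.1
          rw [hxt, ← hσ₀] at this
          exact this
        · rintro ⟨hxS, hsc⟩
          refine ⟨hxS, ?_⟩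
          rw [← hσ₀]
          exact (sc_orbit_eq b σ₀.1 x.1 hsc).symm
      have := count_lemma hn g S hinf htr σ₀.1
      rw [← hset, Set.ncard_coe_finset] at this
      exact this
    rw [h1, Finset.sum_congr rfl h2, Finset.sum_const, smul_eq_mul]
  · -- infinite
    intro i
    obtain ⟨σ, hσS, hσ⟩ := Finset.mem_image.1 (F.equivFin.symm i).2
    show ((F.equivFin.symm i : {x // x ∈ F}) : Set ℤ).Infinite
    rw [← hσ]
    exact barG_orbit_infinite hn g hinf σ.1
  · -- pairwise disjoint
    intro i j hij
    by_contra hnd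
    obtain ⟨w, hwi, hwj⟩ := Set.not_disjoint_iff.1 hnd
    obtain ⟨σ, hσS, hσ⟩ := Finset.mem_image.1 (F.equivFin.symm i).2
    obtain ⟨τ, hτS, hτ⟩ := Finset.mem_image.1 (F.equivFin.symm j).2
    change w ∈ ((F.equivFin.symm i : {x // x ∈ F}) : Set ℤ) at hwi
    change w ∈ ((F.equivFin.symm j : {x // x ∈ F}) : Set ℤ) at hwj
    rw [← hσ] at hwi
    rw [← hτ] at hwj
    have hi : ((F.equivFin.symm i : {x // x ∈ F}) : Set ℤ) = {w' | b.SameCycle w w'} := by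
      rw [← hσ]
      exact sc_orbit_eq b σ.1 w hwi
    have hj : ((F.equivFin.symm j : {x // x ∈ F}) : Set ℤ) = {w' | b.SameCycle w w'} := by
      rw [← hτ]
      exact sc_orbit_eq b τ.1 w hwj
    have : F.equivFin.symm i = F.equivFin.symm j := Subtype.ext (hi.trans hj.symm)
    exact hij (F.equivFin.symm.injective this)
  · -- union
    ext j
    simp only [Set.mem_iUnion, Set.mem_univ, iff_true]
    obtain ⟨σ, ⟨hσS, hσsc⟩, -⟩ := htr (j, ⟨0, hn⟩)
    have hO : {w | b.SameCycle σ.1 w} ∈ F := Finset.mem_image.2 ⟨σ, hσS, rfl⟩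
    refine ⟨F.equivFin ⟨_, hO⟩, ?_⟩
    have : (F.equivFin.symm (F.equivFin ⟨_, hO⟩) : {x // x ∈ F})
        = ⟨{w | b.SameCycle σ.1 w}, hO⟩ := Equiv.symm_apply_apply _ _
    rw [this]
    obtain ⟨k, hk⟩ := hσsc
    exact ⟨k, by rw [← barG_zpow hn g k σ, hk]⟩
  · -- ncard
    intro i
    obtain ⟨σ, hσS, hσ⟩ := Finset.mem_image.1 (F.equivFin.symm i).2
    have : {x : ℤ × Fin n | x.1 ∈ ((F.equivFin.symm i : {x // x ∈ F}) : Set ℤ)}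
        = {x : ℤ × Fin n | b.SameCycle σ.1 x.1} := by
      rw [← hσ]; rfl
    rw [this]
    exact count_lemma hn g S hinf htr σ.1

end

lemma backward_dir {n : ℕ} (hn : 0 < n) (S : Finset (ℤ × Fin n)) (r : ℕ)
    (P : Fin r → Set ℤ)
    (hPinf : ∀ i, (P i).Infinite)
    (hPdisj : Pairwise fun i j => Disjoint (P i) (P j))
    (hPuniv : (⋃ i, P i) = Set.univ)
    (hPcard : ∀ i, ((↑S : Set (ℤ × Fin n)) ∩ {x | x.1 ∈ P i}).ncard = n) :
    ∃ g : omegaKn n ≃g omegaKn n,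
      (∀ v, {w | Equiv.Perm.SameCycle g.toEquiv v w}.Infinite) ∧
      (∀ x, ∃! σ, σ ∈ S ∧ Equiv.Perm.SameCycle g.toEquiv σ x) := by
  classical
  -- index function
  have hU : ∀ j : ℤ, ∃ i, j ∈ P i := by
    intro j
    have : j ∈ ⋃ i, P i := hPuniv.symm ▸ Set.mem_univ j
    exact Set.mem_iUnion.mp this
  choose idx hidx using hU
  have huniq : ∀ (j : ℤ) (i : Fin r), j ∈ P i → i = idx j := by
    intro j i h
    by_contra hne
    exact Set.disjoint_left.1 (hPdisj hne) h (hidx j)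
  -- bijections ℤ ≃ P i
  have hb : ∀ i, Nonempty (ℤ ≃ ↥(P i)) := by
    intro i
    haveI : Infinite ↥(P i) := Set.infinite_coe_iff.2 (hPinf i)
    obtain ⟨d⟩ := nonempty_denumerable ↥(P i)
    exact ⟨(Denumerable.eqv ℤ).trans (Denumerable.eqv ↥(P i)).symm⟩
  have β : ∀ i, ℤ ≃ ↥(P i) := fun i => (hb i).some
  -- enumerations of S ∩ blocks
  set Si : Fin r → Finset (ℤ × Fin n) := fun i => S.filter (fun x => x.1 ∈ P i) with hSi
  have hSicard : ∀ i, (Si i).card = n := by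
    intro i
    have hset : ((Si i : Finset (ℤ × Fin n)) : Set (ℤ × Fin n))
        = (↑S : Set (ℤ × Fin n)) ∩ {x | x.1 ∈ P i} := by
      ext x; simp [hSi, Finset.mem_filter]
    have := hPcard i
    rw [← hset, Set.ncard_coe_finset] at this
    exact this
  have εe : ∀ i, Fin n ≃ ↥(Si i) := fun i => (Finset.equivFinOfCardEq (hSicard i)).symm
  set εf : ∀ i, Fin n → ℤ × Fin n := fun i a => ((εe i a : {x // x ∈ Si i}) : ℤ × Fin n)
    with hεf
  have hεmem : ∀ i a, εf i a ∈ Si i := fun i a => (εe i a).2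
  have hεS : ∀ i a, εf i a ∈ S := fun i a => (Finset.mem_filter.1 (hεmem i a)).1
  have hεP : ∀ i a, (εf i a).1 ∈ P i := fun i a => by
    have := (Finset.mem_filter.1 (hεmem i a)).2
    exact this
  have hεinj : ∀ i, Function.Injective (εf i) := by
    intro i a a' h
    exact (εe i).injective (Subtype.ext h)
  have hεsurj : ∀ i, ∀ σ ∈ Si i, ∃ a, εf i a = σ := by
    intro i σ hσ
    exact ⟨(εe i).symm ⟨σ, hσ⟩, by simp [hεf]⟩
  -- offsets
  set c : ∀ i : Fin r, Fin n → ℤ := fun i a => (β i).symm ⟨(εf i a).1, hεP i a⟩ with hc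
  have hck : ∀ i a, ((β i (c i a) : ↥(P i)) : ℤ) = (εf i a).1 := by
    intro i a
    rw [hc]
    simp
  -- the permutations π i m
  have hπ' : ∀ (i : Fin r) (m : ℤ),
      ∃ π : Equiv.Perm (Fin n), ∀ a, (εf i a).1 = ((β i m : ↥(P i)) : ℤ) → π a = (εf i a).2 :=
    fun i m => perm_extend _ (εf i) (hεinj i)
  choose π hπ using hπ'
  -- the parametrization W
  set W : Fin r × Fin n × ℤ → ℤ × Fin n :=
    fun t => (((β t.1 (t.2.2 + c t.1 t.2.1) : ↥(P t.1)) : ℤ),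
               π t.1 (t.2.2 + c t.1 t.2.1) t.2.1) with hW
  have hWP : ∀ t, (W t).1 ∈ P t.1 := fun t => (β t.1 (t.2.2 + c t.1 t.2.1)).2
  have hβval : ∀ (i : Fin r) (m m' : ℤ),
      ((β i m : ↥(P i)) : ℤ) = ((β i m' : ↥(P i)) : ℤ) → m = m' := by
    intro i m m' h
    exact (β i).injective (Subtype.ext h)
  have hWinj : Function.Injective W := by
    rintro ⟨i, a, k⟩ ⟨i', a', k'⟩ h
    obtain ⟨h1, h2⟩ := Prod.ext_iff.1 h
    simp only [hW] at h1 h2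
    have hii : i = i' := by
      have hm : ((β i (k + c i a) : ↥(P i)) : ℤ) ∈ P i := (β i (k + c i a)).2
      have hm' : ((β i (k + c i a) : ↥(P i)) : ℤ) ∈ P i' := by
        rw [h1]; exact (β i' (k' + c i' a')).2
      rw [huniq _ _ hm, huniq _ _ hm']
    subst hii
    have hmm : k + c i a = k' + c i a' := hβval i _ _ h1
    rw [← hmm] at h2
    have haa : a = a' := (π i (k + c i a)).injective h2
    subst haa
    have : k = k' := by omega
    rw [this]
  have hWsurj : Function.Surjective W := by
    rintro ⟨j, bb⟩
    set i := idx j with hi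
    set m : ℤ := (β i).symm ⟨j, hidx j⟩ with hm
    set a : Fin n := (π i m).symm bb with ha
    refine ⟨⟨i, a, m - c i a⟩, ?_⟩
    have h1 : m - c i a + c i a = m := by omega
    simp only [hW, h1]
    have h2 : ((β i m : ↥(P i)) : ℤ) = j := by rw [hm]; simp
    have h3 : π i m ((π i m).symm bb) = bb := by simp
    exact Prod.ext h2 h3
  set ω : (Fin r × Fin n × ℤ) ≃ (ℤ × Fin n) := Equiv.ofBijective W ⟨hWinj, hWsurj⟩ with hω
  set shiftE : Equiv.Perm (Fin r × Fin n × ℤ) :=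
    Equiv.prodCongr (Equiv.refl _) (Equiv.prodCongr (Equiv.refl _) (Equiv.addRight 1))
    with hshift
  have hshift_apply : ∀ t : Fin r × Fin n × ℤ, shiftE t = (t.1, t.2.1, t.2.2 + 1) := by
    intro t; rfl
  set gE : Equiv.Perm (ℤ × Fin n) := (ω.symm.trans shiftE).trans ω with hgE
  have hωW : ∀ t, ω t = W t := fun t => rfl
  have hg1 : ∀ t, gE (W t) = W (shiftE t) := by
    intro t
    show ω (shiftE (ω.symm (W t))) = W (shiftE t)
    rw [← hωW t, Equiv.symm_apply_apply, hωW]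
  have hshiftpow : ∀ (k : ℤ) (t : Fin r × Fin n × ℤ),
      (shiftE ^ k) t = (t.1, t.2.1, t.2.2 + k) := by
    have hsymm : ∀ t : Fin r × Fin n × ℤ, shiftE⁻¹ t = (t.1, t.2.1, t.2.2 - 1) := by
      intro t
      apply shiftE.injective
      rw [show shiftE (shiftE⁻¹ t) = t from shiftE.apply_symm_apply t]
      show t = shiftE (t.1, t.2.1, t.2.2 - 1)
      rw [hshift_apply]
      show t = (t.1, t.2.1, t.2.2 - 1 + 1)
      refine Prod.ext rfl (Prod.ext rfl ?_)
      show t.2.2 = t.2.2 - 1 + 1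
      omega
    intro k
    induction k using Int.induction_on with
    | zero => intro t; simp
    | succ mm ih =>
        intro t
        rw [zpow_add_one, Equiv.Perm.mul_apply, ih, hshift_apply]
        refine Prod.ext rfl (Prod.ext rfl ?_)
        simp; ring
    | pred mm ih =>
        intro t
        rw [zpow_sub_one, Equiv.Perm.mul_apply, ih, hsymm]
        refine Prod.ext rfl (Prod.ext rfl ?_)
        simp; ring
  have hpow : ∀ (k : ℤ) (t : Fin r × Fin n × ℤ), (gE ^ k) (W t) = W ((shiftE ^ k) t) := by
    intro k t
    exact (semiconj_zpow shiftE gE W (fun t => (hg1 t).symm) k t).symm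
  have hW0 : ∀ (i : Fin r) (a : Fin n), W (i, a, 0) = εf i a := by
    intro i a
    show (((β i ((0 : ℤ) + c i a) : ↥(P i)) : ℤ), π i ((0 : ℤ) + c i a) a) = εf i a
    rw [zero_add]
    refine Prod.ext ?_ ?_
    · exact hck i a
    · exact hπ i (c i a) a (hck i a).symm
  have hWfst : ∀ (i i' : Fin r) (a a' : Fin n) (s s' : ℤ),
      (W (i, a, s)).1 = (W (i', a', s')).1 ↔ (i = i' ∧ s + c i a = s' + c i' a') := by
    intro i i' a a' s s'
    constructor
    · intro h
      have hm : (W (i, a, s)).1 ∈ P i := hWP (i, a, s)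
      have hm' : (W (i, a, s)).1 ∈ P i' := by rw [h]; exact hWP (i', a', s')
      have hii : i = i' := by rw [huniq _ _ hm, huniq _ _ hm']
      subst hii
      exact ⟨rfl, hβval i _ _ h⟩
    · rintro ⟨hii, hmm⟩
      subst hii
      show ((β i (s + c i a) : ↥(P i)) : ℤ) = ((β i (s' + c i a') : ↥(P i)) : ℤ)
      rw [hmm]
  have hgW : ∀ (i : Fin r) (a : Fin n) (s : ℤ), gE (W (i, a, s)) = W (i, a, s + 1) := by
    intro i a s
    rw [hg1, hshift_apply]
  have hfstiff : ∀ x y : ℤ × Fin n, (gE x).1 = (gE y).1 ↔ x.1 = y.1 := by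
    intro x y
    obtain ⟨⟨i, a, s⟩, rfl⟩ := hWsurj x
    obtain ⟨⟨i', a', s'⟩, rfl⟩ := hWsurj y
    rw [hgW, hgW, hWfst, hWfst]
    constructor
    · rintro ⟨h1, h2⟩; exact ⟨h1, by omega⟩
    · rintro ⟨h1, h2⟩; exact ⟨h1, by omega⟩
  refine ⟨⟨gE, ?_⟩, ?_, ?_⟩
  · -- graph automorphism
    intro x y
    rw [omegaKn_adj, omegaKn_adj]
    constructor
    · rintro ⟨hne, hfst⟩
      exact ⟨fun h => hne (congrArg gE h), (hfstiff x y).1 hfst⟩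
    · rintro ⟨hne, hfst⟩
      exact ⟨fun h => hne (gE.injective h), (hfstiff x y).2 hfst⟩
  · -- infinite orbits
    intro v
    obtain ⟨⟨i, a, s⟩, rfl⟩ := hWsurj v
    apply Set.infinite_of_injective_forall_mem (f := fun k : ℤ => W (i, a, s + k))
    · intro k l h
      have := hWinj h
      simp only [Prod.mk.injEq] at this
      omega
    · intro k
      refine ⟨k, ?_⟩
      rw [hpow k (i, a, s), hshiftpow]
  · -- transversal
    intro x
    obtain ⟨⟨i, a, s⟩, rfl⟩ := hWsurj x
    refine ⟨εf i a, ⟨hεS i a, ⟨s, ?_⟩⟩, ?_⟩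
    · rw [← hW0, hpow s (i, a, 0), hshiftpow]
      show W (i, a, 0 + s) = W (i, a, s)
      rw [zero_add]
    · rintro σ' ⟨hσ'S, k, hk⟩
      have hσ'Si : σ' ∈ Si (idx σ'.1) := by
        rw [hSi]
        exact Finset.mem_filter.2 ⟨hσ'S, hidx σ'.1⟩
      obtain ⟨a₀, ha₀⟩ := hεsurj _ _ hσ'Si
      have h4 : W (idx σ'.1, a₀, 0 + k) = W (i, a, s) := by
        rw [← hshiftpow k (idx σ'.1, a₀, 0), ← hpow, hW0, ha₀]
        exact hk
      have h5 := hWinj h4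
      simp only [Prod.mk.injEq] at h5
      obtain ⟨h6, h7, h8⟩ := h5
      rw [← ha₀, h6, h7]

/-- Let Σ be a finite subset of ωK_n.  There exists an automorphism of
ωK_n with all orbits infinite having Σ as a set of orbit representatives if and only
if |Σ| = r·n for some r, and there is a partition {P_1, …, P_r} of ℤ into infinite
sets such that Σ_{j ∈ P_i} |L_j ∩ Σ| = n for all i. -/

theorem stmt_9 (n : ℕ) (hn : 0 < n) (S : Finset (ℤ × Fin n)) :
    (∃ g : omegaKn n ≃g omegaKn n,
        (∀ v, {w | Equiv.Perm.SameCycle g.toEquiv v w}.Infinite) ∧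
        (∀ x, ∃! σ, σ ∈ S ∧ Equiv.Perm.SameCycle g.toEquiv σ x)) ↔
      ∃ r : ℕ, S.card = r * n ∧
        ∃ P : Fin r → Set ℤ,
          (∀ i, (P i).Infinite) ∧
          (Pairwise fun i j => Disjoint (P i) (P j)) ∧
          (⋃ i, P i) = Set.univ ∧
          ∀ i, ((↑S : Set (ℤ × Fin n)) ∩ {x | x.1 ∈ P i}).ncard = n := by
  constructor
  · rintro ⟨g, hinf, htr⟩
    exact forward_dir hn g S hinf htr
  · rintro ⟨r, hcard, P, hPinf, hPdisj, hPuniv, hPcard⟩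
    exact backward_dir hn S r P hPinf hPdisj hPuniv hPcard
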